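/- The set L_d of d×d bracelet matrices is star-shaped with respect to the flat matrix W_d: if B is a bracelet matrix, then for every λ ∈ [0,1] the matrix (1−λ)B + λW_d is also a bracelet matrix. -/

import Mathlib

open Finset

/-- squared sum dominates sum of squares for nonneg terms -/
lemma sum_sq_le_sq_sum {ι : Type*} (E : Finset ι) (t : ι → ℝ) (ht : ∀ j ∈ E, 0 ≤ t j) :
    ∑ j ∈ E, t j ^ 2 ≤ (∑ j ∈ E, t j) ^ 2 := by
  calc ∑ j ∈ E, t j ^ 2 ≤ ∑ j ∈ E, t j * (∑ i ∈ E, t i) := by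
        apply Finset.sum_le_sum
        intro j hj
        rw [pow_two]
        exact mul_le_mul_of_nonneg_left (Finset.single_le_sum ht hj) (ht j hj)
    _ = (∑ j ∈ E, t j) ^ 2 := by rw [← Finset.sum_mul, pow_two]

/-- triangle inequality for ℝ² norms via ℂ -/
lemma sqrt_sq_add_sq_sum_le {ι : Type*} (E : Finset ι) (a b : ι → ℝ) :
    Real.sqrt ((∑ j ∈ E, a j) ^ 2 + (∑ j ∈ E, b j) ^ 2) ≤
      ∑ j ∈ E, Real.sqrt (a j ^ 2 + b j ^ 2) := by
  have h := norm_sum_le E (fun j => ((a j : ℂ) + (b j : ℂ) * Complex.I))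
  have h1 : ∑ j ∈ E, ((a j : ℂ) + (b j : ℂ) * Complex.I)
      = ((∑ j ∈ E, a j : ℝ) : ℂ) + ((∑ j ∈ E, b j : ℝ) : ℂ) * Complex.I := by
    rw [Complex.ofReal_sum, Complex.ofReal_sum, Finset.sum_mul, Finset.sum_add_distrib]
  rw [h1] at h
  simpa only [Complex.norm_add_mul_I] using h

lemma scalar_ineq (α c x0 y0 T R u0 v0 dd : ℝ) (hα : 0 ≤ α) (hc : 0 ≤ c)
    (hx : x0 ^ 2 = u0) (hy : y0 ^ 2 = v0) (hT : x0 * y0 ≤ T) (hT0 : 0 ≤ x0 * y0)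
    (hR2 : (1 - u0) + (1 - v0) - 2 * T ≤ R ^ 2)
    (hu0 : 2 * u0 ≤ 1) (hv0 : 2 * v0 ≤ 1) (hd : 2 ≤ dd) :
    (α * (x0 * y0) + c) ^ 2 + α * c * (x0 - y0) ^ 2
      ≤ (α * T + (dd - 1) * c) ^ 2 + α * c * R ^ 2 := by
  have hT0' : 0 ≤ T := hT0.trans hT
  have t1 : 0 ≤ α ^ 2 * (T ^ 2 - (x0 * y0) ^ 2) := by
    have : (x0 * y0) ^ 2 ≤ T ^ 2 := by nlinarith
    nlinarith [sq_nonneg α]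
  have t2 : 0 ≤ α * c * (2 - 2 * u0 - 2 * v0) :=
    mul_nonneg (mul_nonneg hα hc) (by linarith)
  have t3 : 0 ≤ α * c * ((2 * dd - 4) * T) :=
    mul_nonneg (mul_nonneg hα hc) (mul_nonneg (by linarith) hT0')
  have t4 : 0 ≤ c ^ 2 * (dd ^ 2 - 2 * dd) := by
    have : 0 ≤ dd ^ 2 - 2 * dd := by nlinarith
    exact mul_nonneg (sq_nonneg c) this
  have t5 : α * c * ((1 - u0) + (1 - v0) - 2 * T) ≤ α * c * R ^ 2 :=
    mul_le_mul_of_nonneg_left hR2 (mul_nonneg hα hc)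
  have p5 : α * c * x0 ^ 2 = α * c * u0 := by rw [hx]
  have p6 : α * c * y0 ^ 2 = α * c * v0 := by rw [hy]
  nlinarith [t1, t2, t3, t4, t5, p5, p6]

lemma key_ineq {d : ℕ} (hd : 2 ≤ d) (α c : ℝ) (hα : 0 ≤ α) (hc : 0 ≤ c)
    (u v : Fin d → ℝ) (hu : ∀ j, 0 ≤ u j) (hv : ∀ j, 0 ≤ v j)
    (hsu : ∑ j, u j = 1) (hsv : ∑ j, v j = 1) (j₀ : Fin d)
    (hu0 : 2 * u j₀ ≤ 1) (hv0 : 2 * v j₀ ≤ 1)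
    (hpoly : 2 * Real.sqrt (u j₀ * v j₀) ≤ ∑ j, Real.sqrt (u j * v j)) :
    2 * Real.sqrt ((α * u j₀ + c) * (α * v j₀ + c)) ≤
      ∑ j, Real.sqrt ((α * u j + c) * (α * v j + c)) := by
  set x : Fin d → ℝ := fun j => Real.sqrt (u j) with hxdef
  set y : Fin d → ℝ := fun j => Real.sqrt (v j) with hydef
  have hx : ∀ j, x j ^ 2 = u j := fun j => Real.sq_sqrt (hu j)
  have hy : ∀ j, y j ^ 2 = v j := fun j => Real.sq_sqrt (hv j)
  set A : Fin d → ℝ := fun j => α * (x j * y j) + c with hAdef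
  set s : Fin d → ℝ := fun j => Real.sqrt (α * c) * |x j - y j| with hsdef
  have hac : Real.sqrt (α * c) ^ 2 = α * c := Real.sq_sqrt (mul_nonneg hα hc)
  have hprod : ∀ j, (α * u j + c) * (α * v j + c) = A j ^ 2 + s j ^ 2 := by
    intro j
    rw [← hx j, ← hy j]
    simp only [hAdef, hsdef]
    rw [mul_pow, sq_abs, hac]
    ring
  set E : Finset (Fin d) := Finset.univ.erase j₀ with hEdef
  have hsplit : ∀ f : Fin d → ℝ, ∑ j, f j = f j₀ + ∑ j ∈ E, f j := fun f =>
    (Finset.add_sum_erase Finset.univ f (Finset.mem_univ j₀)).symm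
  set T : ℝ := ∑ j ∈ E, x j * y j with hTdef
  set R : ℝ := ∑ j ∈ E, |x j - y j| with hRdef
  have hxy : ∀ j, Real.sqrt (u j * v j) = x j * y j := fun j => Real.sqrt_mul (hu j) _
  have hT : x j₀ * y j₀ ≤ T := by
    have h := hpoly
    rw [hsplit (fun j => Real.sqrt (u j * v j))] at h
    simp only [hxy] at h
    linarith
  have hT0 : 0 ≤ x j₀ * y j₀ := mul_nonneg (Real.sqrt_nonneg _) (Real.sqrt_nonneg _)
  have hT0' : 0 ≤ T := hT0.trans hT
  have hsumx : ∑ j ∈ E, x j ^ 2 = 1 - u j₀ := by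
    have h : ∑ j, x j ^ 2 = 1 := by simp only [hx]; exact hsu
    rw [hsplit (fun j => x j ^ 2), hx j₀] at h
    linarith
  have hsumy : ∑ j ∈ E, y j ^ 2 = 1 - v j₀ := by
    have h : ∑ j, y j ^ 2 = 1 := by simp only [hy]; exact hsv
    rw [hsplit (fun j => y j ^ 2), hy j₀] at h
    linarith
  have hR2 : (1 - u j₀) + (1 - v j₀) - 2 * T ≤ R ^ 2 := by
    have h1 : ∑ j ∈ E, (x j - y j) ^ 2 ≤ R ^ 2 := by
      have := sum_sq_le_sq_sum E (fun j => |x j - y j|) (fun j _ => abs_nonneg _)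
      simpa [sq_abs] using this
    have h2 : ∑ j ∈ E, (x j - y j) ^ 2
        = (∑ j ∈ E, x j ^ 2) + (∑ j ∈ E, y j ^ 2) - 2 * T := by
      rw [hTdef, Finset.mul_sum, ← Finset.sum_add_distrib, ← Finset.sum_sub_distrib]
      exact Finset.sum_congr rfl fun j _ => by ring
    rw [h2, hsumx, hsumy] at h1
    linarith
  have hd1 : 1 ≤ d := le_trans one_le_two hd
  have hcard : (E.card : ℝ) = (d : ℝ) - 1 := by
    rw [hEdef, Finset.card_erase_of_mem (Finset.mem_univ j₀), Finset.card_univ,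
      Fintype.card_fin]
    push_cast [Nat.cast_sub hd1]
    ring
  have hPA : ∑ j ∈ E, A j = α * T + ((d : ℝ) - 1) * c := by
    simp only [hAdef]
    rw [Finset.sum_add_distrib, ← Finset.mul_sum, Finset.sum_const, nsmul_eq_mul, hcard, ← hTdef]
  have hQs : ∑ j ∈ E, s j = Real.sqrt (α * c) * R := by
    simp only [hsdef]
    rw [← Finset.mul_sum, ← hRdef]
  have hdR : (2 : ℝ) ≤ (d : ℝ) := by exact_mod_cast hd
  have main : A j₀ ^ 2 + s j₀ ^ 2 ≤ (∑ j ∈ E, A j) ^ 2 + (∑ j ∈ E, s j) ^ 2 := by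
    rw [hPA, hQs, mul_pow, hac]
    simp only [hAdef, hsdef]
    rw [mul_pow, sq_abs, hac]
    exact scalar_ineq α c (x j₀) (y j₀) T R (u j₀) (v j₀) (d : ℝ) hα hc
      (hx j₀) (hy j₀) hT hT0 hR2 hu0 hv0 hdR
  calc 2 * Real.sqrt ((α * u j₀ + c) * (α * v j₀ + c))
      = Real.sqrt (A j₀ ^ 2 + s j₀ ^ 2) + Real.sqrt (A j₀ ^ 2 + s j₀ ^ 2) := by
        rw [hprod j₀]; ring
    _ ≤ Real.sqrt (A j₀ ^ 2 + s j₀ ^ 2)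
        + Real.sqrt ((∑ j ∈ E, A j) ^ 2 + (∑ j ∈ E, s j) ^ 2) := by
        exact add_le_add le_rfl (Real.sqrt_le_sqrt main)
    _ ≤ Real.sqrt (A j₀ ^ 2 + s j₀ ^ 2) + ∑ j ∈ E, Real.sqrt (A j ^ 2 + s j ^ 2) :=
        add_le_add le_rfl (sqrt_sq_add_sq_sum_le E A s)
    _ = ∑ j, Real.sqrt (A j ^ 2 + s j ^ 2) :=
        (hsplit fun j => Real.sqrt (A j ^ 2 + s j ^ 2)).symm
    _ = ∑ j, Real.sqrt ((α * u j + c) * (α * v j + c)) :=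
        Finset.sum_congr rfl fun j _ => by rw [hprod j]

/-- A `d × d` real matrix is bistochastic (doubly stochastic) if all its entries are
non-negative and each row and each column sums to `1`. -/
def Bistochastic {d : ℕ} (B : Matrix (Fin d) (Fin d) ℝ) : Prop :=
  (∀ j k, 0 ≤ B j k) ∧ (∀ j, ∑ k, B j k = 1) ∧ (∀ k, ∑ j, B j k = 1)

/-- A bistochastic matrix is bracelet if for every pair of columns `k, l` and every `j₀`,
`2 √(B j₀ k * B j₀ l) ≤ ∑ j, √(B j k * B j l)` (equivalently, twice the maximum is at most
the sum), and the analogous condition holds for every pair of rows. -/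
def Bracelet {d : ℕ} (B : Matrix (Fin d) (Fin d) ℝ) : Prop :=
  Bistochastic B ∧
  (∀ k l j₀ : Fin d, 2 * Real.sqrt (B j₀ k * B j₀ l) ≤ ∑ j, Real.sqrt (B j k * B j l)) ∧
  (∀ j k l₀ : Fin d, 2 * Real.sqrt (B j l₀ * B k l₀) ≤ ∑ l, Real.sqrt (B j l * B k l))

/-- The flat (van der Waerden) matrix `W_d` with all entries equal to `1/d`. -/
noncomputable def flatMatrix (d : ℕ) : Matrix (Fin d) (Fin d) ℝ := Matrix.of fun _ _ => (1 : ℝ) / d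

/-- The set of bracelet matrices is star-shaped with respect to the flat matrix `W_d`:
if `B` is bracelet, then for every `λ ∈ [0,1]`, `(1-λ) B + λ W_d` is also bracelet. -/
theorem bracelet_starShaped {d : ℕ} (B : Matrix (Fin d) (Fin d) ℝ) (hB : Bracelet B)
    (lam : ℝ) (hlam : lam ∈ Set.Icc (0 : ℝ) 1) :
    Bracelet ((1 - lam) • B + lam • flatMatrix d) := by
  obtain ⟨hlam0, hlam1⟩ := hlam
  obtain ⟨⟨hBnn, hBrow, hBcol⟩, hBc, hBr⟩ := hB
  have hent : ∀ j k, ((1 - lam) • B + lam • flatMatrix d) j k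
      = (1 - lam) * B j k + lam * (1 / (d : ℝ)) := by
    intro j k
    simp [flatMatrix, Matrix.add_apply, Matrix.smul_apply, smul_eq_mul]
  have hα : (0 : ℝ) ≤ 1 - lam := by linarith
  have hc : (0 : ℝ) ≤ lam * (1 / (d : ℝ)) := mul_nonneg hlam0 (by positivity)
  have hd1 : d = 1 → False := by
    intro h
    subst h
    have h2 := hBc 0 0 0
    have hrow := hBrow 0
    rw [Fin.sum_univ_one] at h2 hrow
    rw [Real.sqrt_mul_self (hBnn 0 0)] at h2
    rw [hrow] at h2
    linarith
  have hcolsum : ∀ j : Fin d, ∑ k, ((1 - lam) * B j k + lam * (1 / (d : ℝ))) = 1 := by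
    intro j
    have hdpos : 0 < d := j.pos
    have hd0 : ((d : ℝ)) ≠ 0 := by positivity
    rw [Finset.sum_add_distrib, ← Finset.mul_sum, hBrow j, Finset.sum_const,
      Finset.card_univ, Fintype.card_fin, nsmul_eq_mul]
    field_simp
    ring
  have hrowsum : ∀ k : Fin d, ∑ j, ((1 - lam) * B j k + lam * (1 / (d : ℝ))) = 1 := by
    intro k
    have hdpos : 0 < d := k.pos
    have hd0 : ((d : ℝ)) ≠ 0 := by positivity
    rw [Finset.sum_add_distrib, ← Finset.mul_sum, hBcol k, Finset.sum_const,
      Finset.card_univ, Fintype.card_fin, nsmul_eq_mul]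
    field_simp
    ring
  have hd2 : ∀ _ : Fin d, 2 ≤ d := by
    intro j
    have hdpos : 0 < d := j.pos
    by_contra h
    exact hd1 (by omega)
  refine ⟨⟨?_, ?_, ?_⟩, ?_, ?_⟩
  · intro j k
    rw [hent]
    exact add_nonneg (mul_nonneg hα (hBnn j k)) hc
  · intro j
    simp only [hent]
    exact hcolsum j
  · intro k
    simp only [hent]
    exact hrowsum k
  · intro k l j₀
    simp only [hent]
    have hu0 : 2 * B j₀ k ≤ 1 := by
      have h := hBc k k j₀
      have h2 : ∑ j, Real.sqrt (B j k * B j k) = ∑ j, B j k :=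
        Finset.sum_congr rfl fun j _ => Real.sqrt_mul_self (hBnn j k)
      rw [h2, hBcol k, Real.sqrt_mul_self (hBnn j₀ k)] at h
      exact h
    have hv0 : 2 * B j₀ l ≤ 1 := by
      have h := hBc l l j₀
      have h2 : ∑ j, Real.sqrt (B j l * B j l) = ∑ j, B j l :=
        Finset.sum_congr rfl fun j _ => Real.sqrt_mul_self (hBnn j l)
      rw [h2, hBcol l, Real.sqrt_mul_self (hBnn j₀ l)] at h
      exact h
    exact key_ineq (hd2 j₀) (1 - lam) (lam * (1 / (d : ℝ))) hα hc
      (fun j => B j k) (fun j => B j l) (fun j => hBnn j k) (fun j => hBnn j l)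
      (hBcol k) (hBcol l) j₀ hu0 hv0 (hBc k l j₀)
  · intro j k l₀
    simp only [hent]
    have hu0 : 2 * B j l₀ ≤ 1 := by
      have h := hBr j j l₀
      have h2 : ∑ l, Real.sqrt (B j l * B j l) = ∑ l, B j l :=
        Finset.sum_congr rfl fun l _ => Real.sqrt_mul_self (hBnn j l)
      rw [h2, hBrow j, Real.sqrt_mul_self (hBnn j l₀)] at h
      exact h
    have hv0 : 2 * B k l₀ ≤ 1 := by
      have h := hBr k k l₀
      have h2 : ∑ l, Real.sqrt (B k l * B k l) = ∑ l, B k l :=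
        Finset.sum_congr rfl fun l _ => Real.sqrt_mul_self (hBnn k l)
      rw [h2, hBrow k, Real.sqrt_mul_self (hBnn k l₀)] at h
      exact h
    exact key_ineq (hd2 l₀) (1 - lam) (lam * (1 / (d : ℝ))) hα hc
      (fun l => B j l) (fun l => B k l) (fun l => hBnn j l) (fun l => hBnn k l)
      (hBrow j) (hBrow k) l₀ hu0 hv0 (hBr j k l₀)
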